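/- Let f, g ∈ ℂ[x], k ≥ 1, and let I, J ⊆ ℕ be finite sets with |I|, |J| ≥ k. (a) For every z ∈ R_{I,J}, the pair (f − F_I(z,·), g − G_J(z,·)) belongs to Ω_{I,J,k}(f,g). (b) If the function z ↦ f(z)* M_I(z)⁻¹ f(z) + g(z)* M_J(z)⁻¹ g(z) attains its minimum over R_{I,J} at some ζ ∈ R_{I,J}, then ‖F_I(ζ,·)‖² + ‖G_J(ζ,·)‖² is the least element of the set { ‖f − f̃‖² + ‖g − g̃‖² : (f̃, g̃) ∈ Ω_{I,J,k}(f,g) }. -/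

import Mathlib

open Matrix

noncomputable section

/-- The generalized Vandermonde matrix `V_K(z)` with `(s,t)` entry `z_s ^ i_t`. -/
def vand {k p : ℕ} (e : Fin p → ℕ) (z : Fin k → ℂ) : Matrix (Fin k) (Fin p) ℂ :=
  Matrix.of fun s t => z s ^ e t

/-- Moore–Penrose pseudoinverse `V† = V*(VV*)⁻¹` of a full-row-rank matrix. -/
def pinv {k p : ℕ} (V : Matrix (Fin k) (Fin p) ℂ) : Matrix (Fin p) (Fin k) ℂ :=
  V.conjTranspose * (V * V.conjTranspose)⁻¹

/-- The generalized Lagrange polynomial `L_{K,i}(z,x) = Σ_t (V_K(z)†)_{t,i} x^{i_t}`. -/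
def lag {k p : ℕ} (e : Fin p → ℕ) (z : Fin k → ℂ) (i : Fin k) : Polynomial ℂ :=
  ∑ t : Fin p, Polynomial.C (pinv (vand e z) t i) * Polynomial.X ^ e t

/-- `M_K(z) = V_K(z) V_K(z)*`. -/
def MI {k p : ℕ} (e : Fin p → ℕ) (z : Fin k → ℂ) : Matrix (Fin k) (Fin k) ℂ :=
  vand e z * (vand e z).conjTranspose

/-- Squared l²-norm of the coefficient vector of a polynomial. -/
def polyNormSq (F : Polynomial ℂ) : ℝ :=
  ∑ m ∈ F.support, ‖F.coeff m‖ ^ 2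

/-- `F_K(z,·) := Σ_i f(z_i) L_{K,i}(z,·)`, the minimal-norm interpolant of `f` at `z`
with support `K`. -/
def FI {k p : ℕ} (e : Fin p → ℕ) (f : Polynomial ℂ) (z : Fin k → ℂ) : Polynomial ℂ :=
  ∑ i : Fin k, Polynomial.C (f.eval (z i)) * lag e z i

/-- The vector `(f(z₁),…,f(z_k))`. -/
def evalVec {k : ℕ} (f : Polynomial ℂ) (z : Fin k → ℂ) : Fin k → ℂ :=
  fun i => f.eval (z i)

/-- `Ω_{I,J,k}(f,g)`: pairs `(f̃,g̃)` with `f−f̃ ∈ ℂ[x]_I`, `g−g̃ ∈ ℂ[x]_J`, having `k`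
common roots forming a point of `R_{I,J}`. -/
def Omega (k : ℕ) {p q : ℕ} (e : Fin p → ℕ) (d : Fin q → ℕ) (f g : Polynomial ℂ) :
    Set (Polynomial ℂ × Polynomial ℂ) :=
  { fg | (f - fg.1).support ⊆ Finset.image e Finset.univ ∧
         (g - fg.2).support ⊆ Finset.image d Finset.univ ∧
         ∃ z : Fin k → ℂ, (vand e z).rank = k ∧ (vand d z).rank = k ∧
           ∀ i : Fin k, fg.1.eval (z i) = 0 ∧ fg.2.eval (z i) = 0 }



def pbuild {p : ℕ} (e : Fin p → ℕ) (c : Fin p → ℂ) : Polynomial ℂ :=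
  ∑ t : Fin p, Polynomial.C (c t) * Polynomial.X ^ e t

lemma pbuild_coeff {p : ℕ} {e : Fin p → ℕ} (he : Function.Injective e)
    (c : Fin p → ℂ) (t : Fin p) : (pbuild e c).coeff (e t) = c t := by
  unfold pbuild
  rw [Polynomial.finset_sum_coeff, Finset.sum_eq_single t]
  · simp
  · intro s _ hs
    rw [Polynomial.coeff_C_mul, Polynomial.coeff_X_pow,
      if_neg (fun h => hs (he h.symm)), mul_zero]
  · simp

lemma pbuild_support {p : ℕ} (e : Fin p → ℕ) (c : Fin p → ℂ) :
    (pbuild e c).support ⊆ Finset.image e Finset.univ := by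
  intro m hm
  by_contra hmem
  apply Polynomial.mem_support_iff.mp hm
  unfold pbuild
  rw [Polynomial.finset_sum_coeff]
  refine Finset.sum_eq_zero fun s _ => ?_
  rw [Polynomial.coeff_C_mul, Polynomial.coeff_X_pow, if_neg, mul_zero]
  exact fun h => hmem (h ▸ Finset.mem_image_of_mem e (Finset.mem_univ s))

lemma pbuild_eval {p : ℕ} (e : Fin p → ℕ) (c : Fin p → ℂ) (x : ℂ) :
    (pbuild e c).eval x = ∑ t, c t * x ^ e t := by
  simp [pbuild, Polynomial.eval_finset_sum]

lemma normSq_of_support {p : ℕ} {e : Fin p → ℕ} (he : Function.Injective e)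
    {h : Polynomial ℂ} (hs : h.support ⊆ Finset.image e Finset.univ) :
    polyNormSq h = ∑ t : Fin p, ‖h.coeff (e t)‖ ^ 2 := by
  unfold polyNormSq
  rw [Finset.sum_subset hs (fun m _ hm => by
    simp [Polynomial.notMem_support_iff.mp hm]),
    Finset.sum_image (fun a _ b _ hab => he hab)]

lemma eval_of_support {p : ℕ} {e : Fin p → ℕ} (he : Function.Injective e)
    {h : Polynomial ℂ} (hs : h.support ⊆ Finset.image e Finset.univ) (x : ℂ) :
    h.eval x = ∑ t : Fin p, h.coeff (e t) * x ^ e t := by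
  conv_lhs => rw [Polynomial.eval_eq_sum, Polynomial.sum_def]
  rw [Finset.sum_subset hs (fun m _ hm => by
    simp [Polynomial.notMem_support_iff.mp hm]),
    Finset.sum_image (fun a _ b _ hab => he hab)]

open scoped ComplexOrder in
lemma isUnit_of_rank {k n : ℕ} (V : Matrix (Fin k) (Fin n) ℂ) (h : V.rank = k) :
    IsUnit (V * V.conjTranspose) := by
  have h2 : (V * V.conjTranspose).rank = k := by
    rw [Matrix.rank_self_mul_conjTranspose, h]
  rw [← Matrix.mulVec_surjective_iff_isUnit]
  have htop : LinearMap.range (V * V.conjTranspose).mulVecLin = ⊤ :=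
    Submodule.eq_top_of_finrank_eq (by rw [← Matrix.rank]; simpa using h2)
  intro y
  obtain ⟨x, hx⟩ := LinearMap.range_eq_top.mp htop y
  exact ⟨x, hx⟩

lemma mul_pinv {k n : ℕ} (V : Matrix (Fin k) (Fin n) ℂ)
    (h : IsUnit (V * V.conjTranspose)) : V * pinv V = 1 := by
  rw [pinv, ← Matrix.mul_assoc]
  exact Matrix.mul_nonsing_inv _ ((Matrix.isUnit_iff_isUnit_det _).mp h)

lemma re_dot {n : ℕ} (u : Fin n → ℂ) : (star u ⬝ᵥ u).re = ∑ t, ‖u t‖ ^ 2 := by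
  rw [dotProduct, Complex.re_sum]
  refine Finset.sum_congr rfl fun t _ => ?_
  simp [Complex.mul_conj', Complex.sq_norm, Complex.normSq_apply]

lemma star_dot_comm {n : ℕ} (u v : Fin n → ℂ) : star (star u ⬝ᵥ v) = star v ⬝ᵥ u := by
  simp [dotProduct, map_sum, mul_comm]

lemma pinv_dot {k n : ℕ} (V : Matrix (Fin k) (Fin n) ℂ)
    (h : IsUnit (V * V.conjTranspose)) (b : Fin k → ℂ) (c : Fin n → ℂ)
    (hc : V *ᵥ c = b) :
    star (pinv V *ᵥ b) ⬝ᵥ c = star b ⬝ᵥ ((V * V.conjTranspose)⁻¹ *ᵥ b) := by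
  have hMh : (V * V.conjTranspose).conjTranspose = V * V.conjTranspose := by
    rw [Matrix.conjTranspose_mul, Matrix.conjTranspose_conjTranspose]
  have hph : (pinv V).conjTranspose = (V * V.conjTranspose)⁻¹ * V := by
    rw [pinv, Matrix.conjTranspose_mul, Matrix.conjTranspose_conjTranspose,
      Matrix.conjTranspose_nonsing_inv, hMh]
  rw [Matrix.star_mulVec, ← Matrix.dotProduct_mulVec, hph, ← Matrix.mulVec_mulVec, hc]

lemma V_pinv_mulVec {k n : ℕ} (V : Matrix (Fin k) (Fin n) ℂ)
    (h : IsUnit (V * V.conjTranspose)) (b : Fin k → ℂ) :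
    V *ᵥ (pinv V *ᵥ b) = b := by
  rw [Matrix.mulVec_mulVec, mul_pinv V h, Matrix.one_mulVec]

lemma key_eq {k n : ℕ} (V : Matrix (Fin k) (Fin n) ℂ)
    (h : IsUnit (V * V.conjTranspose)) (b : Fin k → ℂ) :
    ∑ t, ‖(pinv V *ᵥ b) t‖ ^ 2 = (star b ⬝ᵥ ((V * V.conjTranspose)⁻¹ *ᵥ b)).re := by
  rw [← re_dot, pinv_dot V h b _ (V_pinv_mulVec V h b)]

lemma key_le {k n : ℕ} (V : Matrix (Fin k) (Fin n) ℂ)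
    (h : IsUnit (V * V.conjTranspose)) (b : Fin k → ℂ) (c : Fin n → ℂ)
    (hc : V *ᵥ c = b) :
    (star b ⬝ᵥ ((V * V.conjTranspose)⁻¹ *ᵥ b)).re ≤ ∑ t, ‖c t‖ ^ 2 := by
  set c₀ := pinv V *ᵥ b with hc₀
  have e1 : star c₀ ⬝ᵥ c = star b ⬝ᵥ ((V * V.conjTranspose)⁻¹ *ᵥ b) :=
    pinv_dot V h b c hc
  have e2 : star c₀ ⬝ᵥ c₀ = star b ⬝ᵥ ((V * V.conjTranspose)⁻¹ *ᵥ b) :=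
    pinv_dot V h b c₀ (V_pinv_mulVec V h b)
  have h3 : star c₀ ⬝ᵥ (c - c₀) = 0 := by
    rw [dotProduct_sub, e1, e2, sub_self]
  have h4 : star (c - c₀) ⬝ᵥ c₀ = 0 := by
    have := congrArg star h3
    rwa [star_dot_comm, star_zero] at this
  have hsplit : star c ⬝ᵥ c =
      star (c - c₀) ⬝ᵥ (c - c₀) + star b ⬝ᵥ ((V * V.conjTranspose)⁻¹ *ᵥ b) := by
    have hcc : c = (c - c₀) + c₀ := (sub_add_cancel c c₀).symm
    conv_lhs => rw [hcc]
    rw [star_add, add_dotProduct, dotProduct_add, dotProduct_add, h4, h3, e2]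
    ring
  have := congrArg Complex.re hsplit
  rw [re_dot, Complex.add_re, re_dot] at this
  have h6 : (0:ℝ) ≤ ∑ t, ‖(c - c₀) t‖ ^ 2 :=
    Finset.sum_nonneg fun t _ => sq_nonneg _
  linarith

lemma FI_eq {k n : ℕ} (e : Fin n → ℕ) (f : Polynomial ℂ) (z : Fin k → ℂ) :
    FI e f z = pbuild e (pinv (vand e z) *ᵥ evalVec f z) := by
  unfold FI lag pbuild
  simp_rw [Finset.mul_sum]
  rw [Finset.sum_comm]
  refine Finset.sum_congr rfl fun t _ => ?_
  rw [Matrix.mulVec, dotProduct]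
  rw [map_sum, Finset.sum_mul]
  refine Finset.sum_congr rfl fun i _ => ?_
  show Polynomial.C (f.eval (z i)) * (Polynomial.C (pinv (vand e z) t i) * Polynomial.X ^ e t)
      = Polynomial.C (pinv (vand e z) t i * f.eval (z i)) * Polynomial.X ^ e t
  rw [_root_.map_mul]; ring

lemma FI_support {k n : ℕ} (e : Fin n → ℕ) (f : Polynomial ℂ) (z : Fin k → ℂ) :
    (FI e f z).support ⊆ Finset.image e Finset.univ := by
  rw [FI_eq]; exact pbuild_support _ _

lemma FI_eval {k n : ℕ} (e : Fin n → ℕ) (f : Polynomial ℂ) (z : Fin k → ℂ)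
    (h : (vand e z).rank = k) (s : Fin k) :
    (FI e f z).eval (z s) = f.eval (z s) := by
  rw [FI_eq, pbuild_eval]
  have h2 : ∑ t, (pinv (vand e z) *ᵥ evalVec f z) t * z s ^ e t
      = (vand e z *ᵥ (pinv (vand e z) *ᵥ evalVec f z)) s := by
    rw [Matrix.mulVec, dotProduct]
    exact Finset.sum_congr rfl fun t _ => by simp [vand, mul_comm]
  rw [h2, V_pinv_mulVec _ (isUnit_of_rank _ h)]
  rfl

lemma FI_normSq {k n : ℕ} (e : Fin n → ℕ) (he : Function.Injective e)
    (f : Polynomial ℂ) (ζ : Fin k → ℂ) (h : (vand e ζ).rank = k) :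
    polyNormSq (FI e f ζ)
      = (star (evalVec f ζ) ⬝ᵥ ((MI e ζ)⁻¹ *ᵥ evalVec f ζ)).re := by
  rw [normSq_of_support he (FI_support e f ζ)]
  have hc : ∀ t, (FI e f ζ).coeff (e t) = (pinv (vand e ζ) *ᵥ evalVec f ζ) t := by
    intro t; rw [FI_eq, pbuild_coeff he]
  simp_rw [hc]
  rw [key_eq _ (isUnit_of_rank _ h)]
  rfl

lemma side_le {k n : ℕ} (e : Fin n → ℕ) (he : Function.Injective e)
    (f ft : Polynomial ℂ) (z : Fin k → ℂ) (hrank : (vand e z).rank = k)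
    (hsupp : (f - ft).support ⊆ Finset.image e Finset.univ)
    (hroot : ∀ i, ft.eval (z i) = 0) :
    (star (evalVec f z) ⬝ᵥ ((MI e z)⁻¹ *ᵥ evalVec f z)).re ≤ polyNormSq (f - ft) := by
  rw [normSq_of_support he hsupp]
  have hVc : vand e z *ᵥ (fun t => (f - ft).coeff (e t)) = evalVec f z := by
    funext s
    rw [Matrix.mulVec, dotProduct]
    have : ∑ t, vand e z s t * (f - ft).coeff (e t)
        = ∑ t, (f - ft).coeff (e t) * (z s) ^ e t :=
      Finset.sum_congr rfl fun t _ => by simp [vand, mul_comm]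
    rw [this, ← eval_of_support he hsupp]
    simp [evalVec, hroot s]
  exact key_le _ (isUnit_of_rank _ hrank) _ _ hVc

/-- (a) for each `z ∈ R_{I,J}` the perturbed pair lies in `Ω_{I,J,k}(f,g)`;
(b) if `z ↦ f(z)* M_I(z)⁻¹ f(z) + g(z)* M_J(z)⁻¹ g(z)` attains its minimum over `R_{I,J}`
at `ζ`, then `‖F_I(ζ,·)‖² + ‖G_J(ζ,·)‖²` is the least element of the set of distances
`‖f−f̃‖² + ‖g−g̃‖²` over `Ω_{I,J,k}(f,g)`. -/
theorem stmt3 {k p q : ℕ} (hk : 1 ≤ k) (hp : k ≤ p) (hq : k ≤ q)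
    (e : Fin p → ℕ) (he : StrictMono e) (d : Fin q → ℕ) (hd : StrictMono d)
    (f g : Polynomial ℂ) :
    (∀ z : Fin k → ℂ, (vand e z).rank = k → (vand d z).rank = k →
      (f - FI e f z, g - FI d g z) ∈ Omega k e d f g) ∧
    (∀ ζ : Fin k → ℂ, (vand e ζ).rank = k → (vand d ζ).rank = k →
      (∀ z : Fin k → ℂ, (vand e z).rank = k → (vand d z).rank = k →
        (star (evalVec f ζ) ⬝ᵥ ((MI e ζ)⁻¹ *ᵥ evalVec f ζ)
          + star (evalVec g ζ) ⬝ᵥ ((MI d ζ)⁻¹ *ᵥ evalVec g ζ)).re ≤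
        (star (evalVec f z) ⬝ᵥ ((MI e z)⁻¹ *ᵥ evalVec f z)
          + star (evalVec g z) ⬝ᵥ ((MI d z)⁻¹ *ᵥ evalVec g z)).re) →
      IsLeast { r : ℝ | ∃ fg ∈ Omega k e d f g,
          r = polyNormSq (f - fg.1) + polyNormSq (g - fg.2) }
        (polyNormSq (FI e f ζ) + polyNormSq (FI d g ζ))) := by
  have parta : ∀ z : Fin k → ℂ, (vand e z).rank = k → (vand d z).rank = k →
      (f - FI e f z, g - FI d g z) ∈ Omega k e d f g := by
    intro z hz1 hz2
    refine ⟨?_, ?_, z, hz1, hz2, fun i => ⟨?_, ?_⟩⟩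
    · rw [sub_sub_cancel]; exact FI_support e f z
    · rw [sub_sub_cancel]; exact FI_support d g z
    · simp [Polynomial.eval_sub, FI_eval e f z hz1 i]
    · simp [Polynomial.eval_sub, FI_eval d g z hz2 i]
  refine ⟨parta, ?_⟩
  intro ζ hζ1 hζ2 hmin
  constructor
  · exact ⟨(f - FI e f ζ, g - FI d g ζ), parta ζ hζ1 hζ2,
      by rw [sub_sub_cancel, sub_sub_cancel]⟩
  · rintro r ⟨⟨ft, gt⟩, ⟨hs1, hs2, z, hz1, hz2, hroot⟩, rfl⟩
    rw [FI_normSq e he.injective f ζ hζ1, FI_normSq d hd.injective g ζ hζ2]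
    have h1 := side_le e he.injective f ft z hz1 hs1 (fun i => (hroot i).1)
    have h2 := side_le d hd.injective g gt z hz2 hs2 (fun i => (hroot i).2)
    have h3 := hmin z hz1 hz2
    rw [Complex.add_re, Complex.add_re] at h3
    linarith
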